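/- Let k be a prime and let F be a set of vectors in (ℤ/kℤ)^n such that the number of ordered pairs (f₁, f₂) ∈ F × F with (f₁, f₂) ≠ 0 in ℤ/kℤ is at most ε|F|². If ε < (k−1)/k, then |F| ≤ k^{n/2} / (1 − (k/(k−1))·ε). -/

import Mathlib

open Finset Complex


private lemma psi_sum {A : Type*} [AddCommMonoid A] (ψ : AddChar A ℂ) {ι : Type*}
    (s : Finset ι) (g : ι → A) : ψ (∑ i ∈ s, g i) = ∏ i ∈ s, ψ (g i) := by
  classical
  induction s using Finset.cons_induction with
  | empty => simp
  | cons i s hi ih =>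
      rw [Finset.sum_cons, Finset.prod_cons, AddChar.map_add_eq_mul, ih]

private lemma orth1 {k : ℕ} [NeZero k] (a : ZMod k) :
    ∑ t : ZMod k, (ZMod.stdAddChar (N := k)) (a * t) = if a = 0 then (k:ℂ) else 0 := by
  simpa [ZMod.card, mul_comm] using AddChar.sum_mulShift a (ZMod.isPrimitive_stdAddChar k)

private lemma key {k n : ℕ} [NeZero k] (a : Fin n → ZMod k) :
    ∑ x : Fin n → ZMod k, (ZMod.stdAddChar (N := k)) (∑ r, a r * x r)
      = if a = 0 then ((k:ℂ))^n else 0 := by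
  classical
  have h1 : ∀ x : Fin n → ZMod k, (ZMod.stdAddChar (N := k)) (∑ r, a r * x r)
      = ∏ r, (ZMod.stdAddChar (N := k)) (a r * x r) := fun x => psi_sum _ _ _
  simp_rw [h1]
  rw [← Fintype.piFinset_univ,
    ← Finset.prod_univ_sum (fun _ => (univ : Finset (ZMod k)))
      (fun r y => (ZMod.stdAddChar (N := k)) (a r * y))]
  rw [Finset.prod_congr rfl fun r _ => orth1 (a := a r)]
  by_cases h : a = 0
  · simp [h, Finset.prod_const]
  · obtain ⟨r, hr⟩ := Function.ne_iff.mp h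
    rw [if_neg h]
    simp only [Pi.zero_apply] at hr
    exact Finset.prod_eq_zero (Finset.mem_univ r) (by simp [hr])

private lemma parsevalR {k n : ℕ} [NeZero k] (F : Finset (Fin n → ZMod k)) :
    ∑ x : Fin n → ZMod k,
        ‖∑ f ∈ F, (ZMod.stdAddChar (N := k)) (∑ r, f r * x r)‖ ^ 2
      = (k:ℝ)^n * F.card := by
  classical
  set ψ : AddChar (ZMod k) ℂ := ZMod.stdAddChar with hψdef
  set S : (Fin n → ZMod k) → ℂ := fun x => ∑ f ∈ F, ψ (∑ r, f r * x r) with hS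
  have hconj : ∀ a : ZMod k, (starRingEnd ℂ) (ψ a) = ψ (-a) := by
    intro a
    rw [hψdef, ZMod.stdAddChar_apply, ZMod.stdAddChar_apply, AddChar.map_neg_eq_inv,
      Circle.coe_inv_eq_conj]
  have hC : ∑ x : Fin n → ZMod k, S x * (starRingEnd ℂ) (S x) = (k:ℂ)^n * F.card := by
    have h1 : ∀ x, S x * (starRingEnd ℂ) (S x)
        = ∑ f ∈ F, ∑ g ∈ F, ψ (∑ r, (f - g) r * x r) := by
      intro x
      rw [hS]
      simp only [map_sum]
      rw [Finset.sum_mul_sum]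
      refine Finset.sum_congr rfl fun f _ => Finset.sum_congr rfl fun g _ => ?_
      rw [hconj, ← AddChar.map_add_eq_mul]
      congr 1
      simp only [Pi.sub_apply, sub_mul]
      rw [Finset.sum_sub_distrib, sub_eq_add_neg]
    simp_rw [h1]
    rw [Finset.sum_comm]
    have h2 : ∀ f ∈ F, ∑ g ∈ F, ∑ x : Fin n → ZMod k, ψ (∑ r, (f - g) r * x r)
        = (k:ℂ)^n := by
      intro f hf
      have h3 : ∀ g ∈ F, ∑ x : Fin n → ZMod k, ψ (∑ r, (f - g) r * x r)
          = if f - g = 0 then ((k:ℂ))^n else 0 := fun g _ => key (f - g)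
      rw [Finset.sum_congr rfl h3]
      simp only [sub_eq_zero]
      rw [Finset.sum_ite_eq, if_pos hf]
    have h2' : ∀ f ∈ F, ∑ x : Fin n → ZMod k, ∑ g ∈ F, ψ (∑ r, (f - g) r * x r)
        = (k:ℂ)^n := fun f hf => Finset.sum_comm.trans (h2 f hf)
    rw [Finset.sum_congr rfl h2', Finset.sum_const, nsmul_eq_mul, mul_comm]
  have h5 := hC
  simp only [Complex.mul_conj'] at h5
  have h6 : ((∑ x : Fin n → ZMod k, ‖S x‖^2 : ℝ) : ℂ) = (k:ℂ)^n * F.card := by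
    push_cast
    exact h5
  exact_mod_cast h6

private lemma orth2 {k : ℕ} [NeZero k] (a : ZMod k) :
    ∑ t : ZMod k, (ZMod.stdAddChar (N := k)) (t * a) = if a = 0 then (k:ℂ) else 0 := by
  simpa [ZMod.card] using AddChar.sum_mulShift a (ZMod.isPrimitive_stdAddChar k)

private lemma step2 {k n : ℕ} [NeZero k] (hk : Nat.Prime k) (F : Finset (Fin n → ZMod k))
    {t : ZMod k} (ht : t ≠ 0) :
    ‖∑ p ∈ F ×ˢ F, (ZMod.stdAddChar (N := k)) (t * ∑ r, p.1 r * p.2 r)‖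
      ≤ Real.sqrt ((k:ℝ)^n) * F.card := by
  classical
  haveI : Fact (Nat.Prime k) := ⟨hk⟩
  set ψ : AddChar (ZMod k) ℂ := ZMod.stdAddChar with hψdef
  set S : (Fin n → ZMod k) → ℂ := fun x => ∑ f ∈ F, ψ (∑ r, f r * x r) with hS
  have hre : ∑ p ∈ F ×ˢ F, ψ (t * ∑ r, p.1 r * p.2 r)
      = ∑ f2 ∈ F, S (fun r => t * f2 r) := by
    rw [Finset.sum_product, Finset.sum_comm]
    refine Finset.sum_congr rfl fun f2 _ => Finset.sum_congr rfl fun f1 _ => ?_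
    congr 1
    rw [Finset.mul_sum]
    exact Finset.sum_congr rfl fun r _ => by ring
  rw [hre]
  have hnonneg : (0:ℝ) ≤ ∑ f2 ∈ F, ‖S (fun r => t * f2 r)‖ :=
    Finset.sum_nonneg fun _ _ => norm_nonneg _
  have hcs : (∑ f2 ∈ F, ‖S (fun r => t * f2 r)‖)^2
      ≤ F.card * ∑ f2 ∈ F, ‖S (fun r => t * f2 r)‖^2 := sq_sum_le_card_mul_sum_sq
  have himg : ∑ f2 ∈ F, ‖S (fun r => t * f2 r)‖^2
      = ∑ x ∈ F.image (fun f2 => fun r => t * f2 r), ‖S x‖^2 := by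
    rw [eq_comm]
    apply Finset.sum_image
    intro a _ b _ hab
    funext r
    exact mul_left_cancel₀ ht (congrFun hab r)
  have hsub : ∑ f2 ∈ F, ‖S (fun r => t * f2 r)‖^2 ≤ (k:ℝ)^n * F.card := by
    rw [himg, ← parsevalR F]
    exact Finset.sum_le_sum_of_subset_of_nonneg (Finset.subset_univ _)
      (fun _ _ _ => by positivity)
  calc ‖∑ f2 ∈ F, S (fun r => t * f2 r)‖
      ≤ ∑ f2 ∈ F, ‖S (fun r => t * f2 r)‖ := norm_sum_le _ _
    _ = Real.sqrt ((∑ f2 ∈ F, ‖S (fun r => t * f2 r)‖)^2) := (Real.sqrt_sq hnonneg).symm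
    _ ≤ Real.sqrt ((F.card : ℝ) * ((k:ℝ)^n * F.card)) :=
        Real.sqrt_le_sqrt (hcs.trans (mul_le_mul_of_nonneg_left hsub (Nat.cast_nonneg _)))
    _ = Real.sqrt ((k:ℝ)^n) * F.card := by
        rw [show (F.card:ℝ) * ((k:ℝ)^n * F.card) = (k:ℝ)^n * (F.card:ℝ)^2 from by ring,
          Real.sqrt_mul (by positivity), Real.sqrt_sq (Nat.cast_nonneg _)]



/-- Supersaturated `k`-town theorem for prime `k`: if at most `ε|F|²` ordered pairs of
vectors of `F` have nonzero scalar product and `ε < (k-1)/k`, then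
`|F| ≤ k^(n/2) / (1 - (k/(k-1))·ε)`. -/
theorem stmt_8 {k n : ℕ} (hk : Nat.Prime k)
    (F : Finset (Fin n → ZMod k)) (ε : ℝ) (hε : 0 ≤ ε)
    (hεk : ε < ((k : ℝ) - 1) / k)
    (hF : (((F ×ˢ F).filter fun p => ∑ r, p.1 r * p.2 r ≠ 0).card : ℝ)
      ≤ ε * (F.card : ℝ) ^ 2) :
    (F.card : ℝ) ≤ (k : ℝ) ^ ((n : ℝ) / 2) / (1 - ((k : ℝ) / ((k : ℝ) - 1)) * ε) := by
  classical
  haveI : NeZero k := ⟨hk.pos.ne'⟩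
  haveI : Fact (Nat.Prime k) := ⟨hk⟩
  set ψ : AddChar (ZMod k) ℂ := ZMod.stdAddChar with hψdef
  set A : ZMod k → ℂ := fun t => ∑ p ∈ F ×ˢ F, ψ (t * ∑ r, p.1 r * p.2 r) with hA
  set N1 : ℕ := ((F ×ˢ F).filter fun p => ∑ r, p.1 r * p.2 r ≠ 0).card with hN1def
  set N0 : ℕ := ((F ×ˢ F).filter fun p => ∑ r, p.1 r * p.2 r = 0).card with hN0def
  have hkR : (1:ℝ) < (k:ℝ) := by exact_mod_cast hk.one_lt
  have hk1 : (0:ℝ) < (k:ℝ) - 1 := by linarith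
  have hkpos : (0:ℝ) < (k:ℝ) := by linarith
  have hN : (N0:ℝ) + N1 = (F.card:ℝ)^2 := by
    have h := Finset.card_filter_add_card_filter_not
      (s := F ×ˢ F) (p := fun p => ∑ r, p.1 r * p.2 r = 0)
    rw [Finset.card_product] at h
    rw [hN0def, hN1def, sq]
    simp only [ne_eq]
    exact_mod_cast h
  have hsumA : ∑ t : ZMod k, A t = (k:ℂ) * N0 := by
    rw [hA]
    rw [Finset.sum_comm]
    rw [Finset.sum_congr rfl fun p _ => orth2 (∑ r, p.1 r * p.2 r)]
    rw [Finset.sum_ite, Finset.sum_const, Finset.sum_const_zero, add_zero, nsmul_eq_mul,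
      mul_comm]
  have hA0 : A 0 = (F.card:ℂ)^2 := by
    rw [hA]
    simp only [zero_mul, AddChar.map_zero_eq_one, Finset.sum_const, Finset.card_product,
      nsmul_eq_mul, mul_one]
    push_cast
    ring
  have hErase : ∑ t ∈ Finset.univ.erase (0 : ZMod k), A t = (k:ℂ) * N0 - (F.card:ℂ)^2 := by
    rw [Finset.sum_erase_eq_sub (Finset.mem_univ (0 : ZMod k)), hsumA, hA0]
  have hbound : ‖∑ t ∈ Finset.univ.erase (0:ZMod k), A t‖
      ≤ ((k:ℝ) - 1) * (Real.sqrt ((k:ℝ)^n) * F.card) := by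
    refine (norm_sum_le _ _).trans ?_
    have hle : ∀ t ∈ Finset.univ.erase (0:ZMod k),
        ‖A t‖ ≤ Real.sqrt ((k:ℝ)^n) * F.card :=
      fun t ht => step2 hk F (Finset.ne_of_mem_erase ht)
    refine (Finset.sum_le_sum hle).trans ?_
    rw [Finset.sum_const, nsmul_eq_mul, Finset.card_erase_of_mem (Finset.mem_univ _),
      Finset.card_univ, ZMod.card, Nat.cast_sub hk.one_le]
    simp
  have hreal : (k:ℝ) * N0 - (F.card:ℝ)^2
      ≤ ((k:ℝ)-1) * (Real.sqrt ((k:ℝ)^n) * F.card) := by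
    have h1 : ((k:ℂ) * N0 - (F.card:ℂ)^2)
        = (((k:ℝ) * N0 - (F.card:ℝ)^2 : ℝ) : ℂ) := by push_cast; ring
    have h2 : (k:ℝ) * N0 - (F.card:ℝ)^2 ≤ ‖∑ t ∈ Finset.univ.erase (0:ZMod k), A t‖ := by
      rw [hErase, h1, Complex.norm_real]
      exact le_abs_self _
    exact h2.trans hbound
  have hmain : ((k:ℝ)-1) * (F.card:ℝ)^2 - (k:ℝ) * N1
      ≤ ((k:ℝ)-1) * (Real.sqrt ((k:ℝ)^n) * F.card) := by
    have h3 : (k:ℝ) * N0 - (F.card:ℝ)^2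
        = ((k:ℝ)-1) * (F.card:ℝ)^2 - (k:ℝ) * N1 := by
      have : (N0:ℝ) = (F.card:ℝ)^2 - N1 := by linarith
      rw [this]; ring
    linarith [hreal]
  have hD : 0 < 1 - ((k:ℝ)/((k:ℝ)-1)) * ε := by
    have h4 : ε * (k:ℝ) < (k:ℝ) - 1 := (lt_div_iff₀ hkpos).mp hεk
    rw [sub_pos, div_mul_eq_mul_div, div_lt_one hk1]
    linarith
  have hK : Real.sqrt ((k:ℝ)^n) = (k:ℝ)^((n:ℝ)/2) := by
    rw [Real.sqrt_eq_rpow, ← Real.rpow_natCast (k:ℝ) n, ← Real.rpow_mul (by positivity)]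
    congr 1
    ring
  rw [← hK]
  rcases eq_or_lt_of_le (show (0:ℝ) ≤ (F.card:ℝ) from Nat.cast_nonneg _) with h0 | h0
  · rw [← h0]
    exact div_nonneg (Real.sqrt_nonneg _) hD.le
  · rw [le_div_iff₀ hD]
    have h5 : ((k:ℝ)-1) * ((F.card:ℝ)^2 * (1 - ((k:ℝ)/((k:ℝ)-1)) * ε))
        ≤ ((k:ℝ)-1) * (Real.sqrt ((k:ℝ)^n) * F.card) := by
      have hexp : ((k:ℝ)-1) * ((F.card:ℝ)^2 * (1 - ((k:ℝ)/((k:ℝ)-1)) * ε))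
          = ((k:ℝ)-1)*(F.card:ℝ)^2 - (k:ℝ) * (ε * (F.card:ℝ)^2) := by
        field_simp
      rw [hexp]
      have h6 : (k:ℝ) * (N1:ℝ) ≤ (k:ℝ) * (ε * (F.card:ℝ)^2) :=
        mul_le_mul_of_nonneg_left hF hkpos.le
      linarith [hmain]
    have h7 : (F.card:ℝ)^2 * (1 - ((k:ℝ)/((k:ℝ)-1)) * ε)
        ≤ Real.sqrt ((k:ℝ)^n) * F.card := le_of_mul_le_mul_left h5 hk1
    have h8 : ((F.card:ℝ) * (1 - ((k:ℝ)/((k:ℝ)-1)) * ε)) * (F.card:ℝ)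
        ≤ Real.sqrt ((k:ℝ)^n) * (F.card:ℝ) := by nlinarith [h7]
    exact le_of_mul_le_mul_right h8 h0
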